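/- Let G, H be closed subspaces of a Hilbert space H₀ and suppose H = span{h} is one-dimensional. Let F = F_G + F_H with F_G ∈ G, F_H = λ₁h for some scalar λ₁ ≠ 0, F_G ≠ 0, and G ≠ H. Define r⁰ = P_{G^⊥}(F) and r¹ = P_{G^⊥}(P_{H^⊥}(r⁰)). Then r⁰ = λ₁ P_{G^⊥}(h), and r¹ is a scalar multiple of r⁰; specifically r¹ = ((λ₁ − λ₂)/λ₁) r⁰ where P_H(P_{G^⊥}(r⁰)) = λ₂ h. Hence r⁰ and r¹ are linearly dependent. -/

import Mathlib

noncomputable def proj {E : Type*} [NormedAddCommGroup E] [InnerProductSpace ℝ E]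
    (K : Submodule ℝ E) [CompleteSpace K] : E →L[ℝ] E :=
  K.subtypeL.comp (K.orthogonalProjectionOnto)

lemma proj_mem {E : Type*} [NormedAddCommGroup E] [InnerProductSpace ℝ E]
    (K : Submodule ℝ E) [CompleteSpace K] (x : E) : proj K x ∈ K :=
  (K.orthogonalProjectionOnto x).2

lemma proj_eq_self {E : Type*} [NormedAddCommGroup E] [InnerProductSpace ℝ E]
    (K : Submodule ℝ E) [CompleteSpace K] {x : E} (hx : x ∈ K) : proj K x = x := by
  exact K.starProjection_eq_self_iff.2 hx

lemma proj_eq_zero {E : Type*} [NormedAddCommGroup E] [InnerProductSpace ℝ E]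
    (K : Submodule ℝ E) [CompleteSpace K] {x : E} (hx : x ∈ Kᗮ) : proj K x = 0 := by
  simp [proj, Submodule.orthogonalProjectionOnto_apply_of_mem_orthogonal hx]

lemma proj_add_proj {E : Type*} [NormedAddCommGroup E] [InnerProductSpace ℝ E]
    [CompleteSpace E] (K : Submodule ℝ E) [CompleteSpace K] (x : E) :
    proj K x + proj Kᗮ x = x := by
  exact K.starProjection_add_starProjection_orthogonal x

theorem stmt13 {E : Type*} [NormedAddCommGroup E] [InnerProductSpace ℝ E] [CompleteSpace E]
    (G : Submodule ℝ E) [CompleteSpace G] (h : E)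
    [CompleteSpace ↥Gᗮ] [CompleteSpace ↥(Submodule.span ℝ {h})]
    [CompleteSpace ↥(Submodule.span ℝ {h})ᗮ]
    (FG : E) (hFG : FG ∈ G) (hFGne : FG ≠ 0)
    (lam1 : ℝ) (hlam1 : lam1 ≠ 0)
    (hGH : G ≠ Submodule.span ℝ {h})
    (F : E) (hF : F = FG + lam1 • h)
    (r0 r1 : E) (hr0 : r0 = proj Gᗮ F)
    (hr1 : r1 = proj Gᗮ (proj (Submodule.span ℝ {h})ᗮ r0))
    (lam2 : ℝ) (hlam2 : proj (Submodule.span ℝ {h}) (proj Gᗮ r0) = lam2 • h) :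
    r0 = lam1 • proj Gᗮ h ∧ r1 = ((lam1 - lam2) / lam1) • r0 := by
  have hFGz : proj Gᗮ FG = 0 :=
    proj_eq_zero Gᗮ (Submodule.le_orthogonal_orthogonal G hFG)
  have h0 : r0 = lam1 • proj Gᗮ h := by
    rw [hr0, hF, map_add, map_smul, hFGz, zero_add]
  refine ⟨h0, ?_⟩
  have hr0mem : r0 ∈ Gᗮ := by rw [hr0]; exact proj_mem _ _
  have hself : proj Gᗮ r0 = r0 := proj_eq_self _ hr0mem
  rw [hself] at hlam2
  set H := Submodule.span ℝ {h}
  have hHperp : proj Hᗮ r0 = r0 - lam2 • h := by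
    have := proj_add_proj H r0
    rw [hlam2] at this
    exact (eq_sub_of_add_eq' this)
  have hp : proj Gᗮ h = lam1⁻¹ • r0 := by
    rw [h0, smul_smul, inv_mul_cancel₀ hlam1, one_smul]
  have hc : (lam1 - lam2) / lam1 = 1 - lam2 * lam1⁻¹ := by
    field_simp
  rw [hr1, hHperp, map_sub, map_smul, hself, hp, smul_smul, hc, sub_smul, one_smul]
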